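/- Let U_{(np)} ~ Beta(np, n+1-np) for p ∈ (0,1), and let ε satisfy p/(n+1) < ε < p. Then P(|U_{(np)} - p| > ε) ≤ 2 exp(-2(n+2)(ε - p/(n+1))^2). -/

import Mathlib

open MeasureTheory Set Real


lemma hoeffding_bernoulli {t : ℝ} (ht0 : 0 < t) (ht1 : t < 1) (x : ℝ) :
    1 - t + t * Real.exp x ≤ Real.exp (t * x + x ^ 2 / 8) := by
  have hD : ∀ y : ℝ, 0 < 1 - t + t * Real.exp y := by
    intro y
    have := Real.exp_pos y
    nlinarith
  set g : ℝ → ℝ := fun y => t * y + y ^ 2 / 8 - Real.log (1 - t + t * Real.exp y) with hg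
  set g1 : ℝ → ℝ := fun y => t + y / 4 - t * Real.exp y / (1 - t + t * Real.exp y) with hg1
  have hDer : ∀ y : ℝ, HasDerivAt g (g1 y) y := by
    intro y
    have h1 : HasDerivAt (fun y : ℝ => 1 - t + t * Real.exp y) (t * Real.exp y) y := by
      simpa using ((Real.hasDerivAt_exp y).const_mul t).const_add (1 - t)
    have h2 : HasDerivAt (fun y : ℝ => Real.log (1 - t + t * Real.exp y))
        (t * Real.exp y / (1 - t + t * Real.exp y)) y := h1.log (hD y).ne'
    have h3 : HasDerivAt (fun y : ℝ => t * y + y ^ 2 / 8) (t + y / 4) y := by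
      have := ((hasDerivAt_pow 2 y).div_const 8).const_add 0
      have h4 : HasDerivAt (fun y : ℝ => t * y) t y := by
        simpa using (hasDerivAt_id y).const_mul t
      have h5 : HasDerivAt (fun y : ℝ => y ^ 2 / 8) (y / 4) y := by
        have := (hasDerivAt_pow 2 y).div_const 8
        convert this using 1
        · rfl
        · rfl
        ring
      simpa using h4.fun_add h5
    simpa using h3.fun_sub h2
  have hDer1 : ∀ y : ℝ, HasDerivAt g1
      (1 / 4 - t * Real.exp y * (1 - t) / (1 - t + t * Real.exp y) ^ 2) y := by
    intro y
    have h1 : HasDerivAt (fun y : ℝ => 1 - t + t * Real.exp y) (t * Real.exp y) y := by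
      simpa using ((Real.hasDerivAt_exp y).const_mul t).const_add (1 - t)
    have h2 : HasDerivAt (fun y : ℝ => t * Real.exp y) (t * Real.exp y) y :=
      (Real.hasDerivAt_exp y).const_mul t
    have h3 : HasDerivAt (fun y : ℝ => t * Real.exp y / (1 - t + t * Real.exp y))
        ((t * Real.exp y * (1 - t + t * Real.exp y) - t * Real.exp y * (t * Real.exp y)) /
          (1 - t + t * Real.exp y) ^ 2) y := h2.div h1 (hD y).ne'
    have h4 : HasDerivAt (fun y : ℝ => t + y / 4) (1 / 4) y := by
      simpa using ((hasDerivAt_id y).div_const 4).const_add t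
    have := h4.fun_sub h3
    convert this using 1
    · rfl
    · rfl
    field_simp
    ring
  have hg2nonneg : ∀ y : ℝ,
      0 ≤ 1 / 4 - t * Real.exp y * (1 - t) / (1 - t + t * Real.exp y) ^ 2 := by
    intro y
    rw [sub_nonneg, div_le_iff₀ (pow_pos (hD y) 2)]
    nlinarith [sq_nonneg (t * Real.exp y - (1 - t)), Real.exp_pos y]
  have hg1mono : Monotone g1 :=
    monotone_of_deriv_nonneg (fun y => (hDer1 y).differentiableAt)
      (fun y => by rw [(hDer1 y).deriv]; exact hg2nonneg y)
  have hg10 : g1 0 = 0 := by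
    simp only [hg1]
    rw [Real.exp_zero]
    field_simp
    ring
  have hg0 : g 0 = 0 := by
    simp only [hg]
    rw [Real.exp_zero]
    norm_num
  have hgpos : ∀ y : ℝ, 0 ≤ g y := by
    intro y
    rcases le_total 0 y with hy | hy
    · have hmono : MonotoneOn g (Set.Ici (0 : ℝ)) := by
        apply monotoneOn_of_deriv_nonneg (convex_Ici 0)
          (fun z _ => (hDer z).differentiableAt.continuousAt.continuousWithinAt)
          (fun z _ => (hDer z).differentiableAt.differentiableWithinAt)
        intro z hz
        rw [(hDer z).deriv]
        rw [interior_Ici] at hz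
        calc (0:ℝ) = g1 0 := hg10.symm
        _ ≤ g1 z := hg1mono (le_of_lt hz)
      have := hmono (Set.self_mem_Ici) hy hy
      rwa [hg0] at this
    · have hmono : AntitoneOn g (Set.Iic (0 : ℝ)) := by
        apply antitoneOn_of_deriv_nonpos (convex_Iic 0)
          (fun z _ => (hDer z).differentiableAt.continuousAt.continuousWithinAt)
          (fun z _ => (hDer z).differentiableAt.differentiableWithinAt)
        intro z hz
        rw [(hDer z).deriv]
        rw [interior_Iic] at hz
        calc g1 z ≤ g1 0 := hg1mono (le_of_lt hz)
        _ = 0 := hg10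
      have := hmono hy (Set.self_mem_Iic) hy
      rwa [hg0] at this
    
  have := hgpos x
  have hlog : Real.log (1 - t + t * Real.exp x) ≤ t * x + x ^ 2 / 8 := by
    simp only [hg] at this
    linarith
  rwa [Real.log_le_iff_le_exp (hD x)] at hlog


lemma binom_lower_tail (n m : ℕ) (hn : 0 < n) (hmn : m ≤ n + 1) {t : ℝ} (ht0 : 0 < t)
    (ht1 : t < 1) (hm : (m : ℝ) - 1 ≤ n * t) :
    ∑ j ∈ Finset.range m, (n.choose j : ℝ) * t ^ j * (1 - t) ^ (n - j)
      ≤ Real.exp (-2 * ((n : ℝ) * t - ((m : ℝ) - 1)) ^ 2 / n) := by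
  have hn' : (0:ℝ) < n := by exact_mod_cast hn
  have ht1' : (0:ℝ) < 1 - t := by linarith
  set s : ℝ := (n : ℝ) * t - ((m:ℝ) - 1) with hs
  have hs0 : 0 ≤ s := by rw [hs]; linarith
  set L : ℝ := 4 * s / n with hL
  have hL0 : 0 ≤ L := by positivity
  have step1 : ∑ j ∈ Finset.range m, (n.choose j : ℝ) * t ^ j * (1 - t) ^ (n - j)
      ≤ ∑ j ∈ Finset.range m,
        Real.exp (L * ((m:ℝ) - 1)) * ((t * Real.exp (-L)) ^ j * (1 - t) ^ (n - j) * (n.choose j : ℝ)) := by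
    apply Finset.sum_le_sum
    intro j hj
    have hj' : (j : ℝ) ≤ (m : ℝ) - 1 := by
      have := Finset.mem_range.mp hj
      have : (j : ℝ) + 1 ≤ m := by exact_mod_cast this
      linarith
    have key : Real.exp (L * ((m:ℝ) - 1)) * ((t * Real.exp (-L)) ^ j * (1 - t) ^ (n - j) * (n.choose j : ℝ))
        = Real.exp (L * (((m:ℝ) - 1) - j)) * ((n.choose j : ℝ) * t ^ j * (1 - t) ^ (n - j)) := by
      have e1 : Real.exp (L * (((m:ℝ) - 1) - j)) = Real.exp (L * ((m:ℝ) - 1)) * Real.exp ((j:ℝ) * -L) := by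
        rw [← Real.exp_add]; ring_nf
      rw [mul_pow, ← Real.exp_nat_mul, e1]
      ring
    rw [key]
    have h1 : (1:ℝ) ≤ Real.exp (L * (((m:ℝ) - 1) - j)) := by
      apply Real.one_le_exp
      have : (0:ℝ) ≤ ((m:ℝ) - 1) - j := by linarith
      positivity
    have h2 : (0:ℝ) ≤ (n.choose j : ℝ) * t ^ j * (1 - t) ^ (n - j) := by positivity
    nlinarith
  have step2 : ∑ j ∈ Finset.range m,
        Real.exp (L * ((m:ℝ) - 1)) * ((t * Real.exp (-L)) ^ j * (1 - t) ^ (n - j) * (n.choose j : ℝ))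
      ≤ ∑ j ∈ Finset.range (n + 1),
        Real.exp (L * ((m:ℝ) - 1)) * ((t * Real.exp (-L)) ^ j * (1 - t) ^ (n - j) * (n.choose j : ℝ)) := by
    apply Finset.sum_le_sum_of_subset_of_nonneg
    · exact Finset.range_subset_range.mpr hmn
    · intro j _ _
      positivity
  have step3 : ∑ j ∈ Finset.range (n + 1),
        Real.exp (L * ((m:ℝ) - 1)) * ((t * Real.exp (-L)) ^ j * (1 - t) ^ (n - j) * (n.choose j : ℝ))
      = Real.exp (L * ((m:ℝ) - 1)) * (t * Real.exp (-L) + (1 - t)) ^ n := by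
    rw [← Finset.mul_sum, add_pow]
  have step4 : (t * Real.exp (-L) + (1 - t)) ^ n ≤ Real.exp (t * (-L) + (-L) ^ 2 / 8) ^ n := by
    apply pow_le_pow_left₀
    · positivity
    · have := hoeffding_bernoulli ht0 ht1 (-L)
      linarith
  have step5 : Real.exp (L * ((m:ℝ) - 1)) * Real.exp (t * (-L) + (-L) ^ 2 / 8) ^ n
      = Real.exp (L * ((m:ℝ) - 1) + n * (t * (-L) + (-L) ^ 2 / 8)) := by
    rw [← Real.exp_nat_mul, ← Real.exp_add]
  have hexp : L * ((m:ℝ) - 1) + (n:ℝ) * (t * (-L) + (-L) ^ 2 / 8) = -2 * s ^ 2 / n := by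
    rw [hL, hs]
    field_simp
    ring
  calc ∑ j ∈ Finset.range m, (n.choose j : ℝ) * t ^ j * (1 - t) ^ (n - j)
      ≤ Real.exp (L * ((m:ℝ) - 1)) * (t * Real.exp (-L) + (1 - t)) ^ n := by
        rw [← step3]; exact le_trans step1 step2
    _ ≤ Real.exp (L * ((m:ℝ) - 1)) * Real.exp (t * (-L) + (-L) ^ 2 / 8) ^ n := by
        apply mul_le_mul_of_nonneg_left step4 (Real.exp_nonneg _)
    _ = Real.exp (-2 * s ^ 2 / n) := by rw [step5, hexp]


noncomputable def Fsum (n k : ℕ) (t : ℝ) : ℝ :=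
  ∑ j ∈ Finset.range k, (n.choose j : ℝ) * t ^ j * (1 - t) ^ (n - j)

lemma Fsum_hasDerivAt (n k : ℕ) (t : ℝ) :
    HasDerivAt (Fsum n k)
      (0 - ((k * n.choose k : ℕ) : ℝ) * t ^ (k - 1) * (1 - t) ^ (n - k)) t := by
  have key : ∀ j : ℕ, HasDerivAt (fun t : ℝ => (n.choose j : ℝ) * t ^ j * (1 - t) ^ (n - j))
      (((j * n.choose j : ℕ) : ℝ) * t ^ (j - 1) * (1 - t) ^ (n - j)
        - (((j + 1) * n.choose (j + 1) : ℕ) : ℝ) * t ^ ((j+1) - 1) * (1 - t) ^ (n - (j+1))) t := by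
    intro j
    have h1 : HasDerivAt (fun t : ℝ => t ^ j) ((j : ℝ) * t ^ (j - 1)) t := hasDerivAt_pow j t
    have h2 : HasDerivAt (fun t : ℝ => (1 - t) ^ (n - j))
        (((n - j : ℕ) : ℝ) * (1 - t) ^ (n - j - 1) * (-1)) t := by
      exact (hasDerivAt_pow (n - j) (1 - t)).comp t
        ((hasDerivAt_id t).const_sub 1)
    have h3 := ((h1.fun_mul h2).const_mul ((n.choose j : ℝ)))
    have hc : (((j + 1) * n.choose (j + 1) : ℕ) : ℝ) = ((n.choose j * (n - j) : ℕ) : ℝ) := by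
      congr 1
      rw [mul_comm, Nat.choose_succ_right_eq]
    have he : n - (j + 1) = n - j - 1 := by omega
    convert h3 using 1
    · rfl
    · rfl
    · ext y; ring
    · rw [hc, he]
      push_cast
      ring
  have := HasDerivAt.fun_sum (fun j (_ : j ∈ Finset.range k) => key j)
  convert this using 1
  · rfl
  · rfl
  · rfl
  rw [Finset.sum_range_sub']
  simp

lemma Fsum_compl (n k : ℕ) (hkn : k ≤ n + 1) (t : ℝ) :
    Fsum n k t + Fsum n (n + 1 - k) (1 - t) = 1 := by
  have h2 : Fsum n (n + 1 - k) (1 - t)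
      = ∑ j ∈ Finset.Ico k (n + 1), (n.choose j : ℝ) * t ^ j * (1 - t) ^ (n - j) := by
    rw [Finset.sum_Ico_eq_sum_range]
    unfold Fsum
    rw [← Finset.sum_range_reflect]
    apply Finset.sum_congr rfl
    intro i hi
    have hi' : i < n + 1 - k := Finset.mem_range.mp hi
    have e1 : n + 1 - k - 1 - i = n - (k + i) := by omega
    have e2 : n - (n - (k + i)) = k + i := by omega
    have e3 : n.choose (n - (k + i)) = n.choose (k + i) := by
      exact Nat.choose_symm (by omega)
    rw [e1, e2, e3]
    ring_nf
  have h3 : Fsum n k t + ∑ j ∈ Finset.Ico k (n + 1), (n.choose j : ℝ) * t ^ j * (1 - t) ^ (n - j)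
      = ∑ j ∈ Finset.range (n + 1), (n.choose j : ℝ) * t ^ j * (1 - t) ^ (n - j) := by
    unfold Fsum
    rw [Finset.range_eq_Ico, Finset.range_eq_Ico]
    exact Finset.sum_Ico_consecutive (fun j => (n.choose j : ℝ) * t ^ j * (1 - t) ^ (n - j)) (Nat.zero_le k) hkn
  rw [h2, h3]
  have hb := add_pow t (1 - t) n
  have : ∑ j ∈ Finset.range (n + 1), (n.choose j : ℝ) * t ^ j * (1 - t) ^ (n - j)
      = (t + (1 - t)) ^ n := by
    rw [hb]
    apply Finset.sum_congr rfl
    intro i _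
    ring
  rw [this]
  norm_num

lemma Fsum_one (n k : ℕ) (hkn : k ≤ n) : Fsum n k 1 = 0 := by
  unfold Fsum
  apply Finset.sum_eq_zero
  intro j hj
  have hj' : j < k := Finset.mem_range.mp hj
  have : n - j ≠ 0 := by omega
  simp [this, zero_pow]

lemma Fsum_integral (n k : ℕ) (a b : ℝ) :
    ∫ x in a..b, ((k * n.choose k : ℕ) : ℝ) * x ^ (k - 1) * (1 - x) ^ (n - k)
      = Fsum n k a - Fsum n k b := by
  have hc : Continuous (fun x : ℝ => ((k * n.choose k : ℕ) : ℝ) * x ^ (k - 1) * (1 - x) ^ (n - k)) := by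
    continuity
  have := intervalIntegral.integral_eq_sub_of_hasDerivAt
    (a := a) (b := b) (f := Fsum n k)
    (f' := fun x => 0 - ((k * n.choose k : ℕ) : ℝ) * x ^ (k - 1) * (1 - x) ^ (n - k))
    (fun x _ => Fsum_hasDerivAt n k x)
    (by apply Continuous.intervalIntegrable; continuity)
  have h2 : ∫ x in a..b, (0 - ((k * n.choose k : ℕ) : ℝ) * x ^ (k - 1) * (1 - x) ^ (n - k))
      = - ∫ x in a..b, ((k * n.choose k : ℕ) : ℝ) * x ^ (k - 1) * (1 - x) ^ (n - k) := by
    simp [intervalIntegral.integral_neg]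
  rw [h2] at this
  linarith [this]

set_option maxHeartbeats 1000000 in
/-- Concentration of the `np`-th uniform order statistic: if `U_(np) ~ Beta(np, n+1-np)`
and `p/(n+1) < ε < p`, then `P(|U_(np) - p| > ε) ≤ 2 exp(-2(n+2)(ε - p/(n+1))²)`. -/
theorem uniform_orderStat_concentration (n k : ℕ) (p : ℝ) (hp : p ∈ Set.Ioo (0 : ℝ) 1)
    (hk : (k : ℝ) = p * n) (hk1 : 1 ≤ k) (hkn : k ≤ n)
    (ε : ℝ) (hε1 : p / (n + 1) < ε) (hε2 : ε < p)
    (f : ℝ → ℝ)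
    (hf : ∀ x, f x = (Real.Gamma (n + 1) / (Real.Gamma k * Real.Gamma (n + 1 - k))) *
        x ^ (k - 1) * (1 - x) ^ (n - k)) :
    (∫ x in Set.Ioo (0 : ℝ) 1 ∩ {x : ℝ | ε < |x - p|}, f x)
      ≤ 2 * Real.exp (-2 * (n + 2) * (ε - p / (n + 1)) ^ 2) := by
  obtain ⟨hp0, hp1⟩ := hp
  have hn0 : 0 < n := lt_of_lt_of_le hk1 hkn
  have hn' : (0:ℝ) < n := by exact_mod_cast hn0
  have hn1 : (0:ℝ) < (n:ℝ) + 1 := by linarith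
  have hε0 : 0 < ε := lt_trans (by positivity) hε1
  have hpe0 : 0 < p - ε := by linarith
  set δ : ℝ := ε - p / ((n:ℝ) + 1) with hδdef
  have hδ0 : 0 < δ := by rw [hδdef]; linarith
  clear_value δ
  -- the Gamma constant equals k * choose n k
  have hC : Real.Gamma ((n:ℝ) + 1) / (Real.Gamma (k:ℝ) * Real.Gamma ((n:ℝ) + 1 - (k:ℝ)))
      = ((k * n.choose k : ℕ) : ℝ) := by
    have e1 : Real.Gamma ((n:ℝ) + 1) = (n.factorial : ℝ) := Real.Gamma_nat_eq_factorial n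
    have ek : (k:ℝ) = ((k - 1 : ℕ) : ℝ) + 1 := by
      have : k - 1 + 1 = k := Nat.succ_pred_eq_of_pos hk1
      exact_mod_cast (congrArg (Nat.cast : ℕ → ℝ) this).symm
    have e2 : Real.Gamma (k:ℝ) = ((k-1).factorial : ℝ) := by
      rw [ek]; exact Real.Gamma_nat_eq_factorial (k-1)
    have en : ((n:ℝ) + 1 - (k:ℝ)) = ((n - k : ℕ) : ℝ) + 1 := by
      rw [Nat.cast_sub hkn]; ring
    have e3 : Real.Gamma ((n:ℝ) + 1 - (k:ℝ)) = ((n-k).factorial : ℝ) := by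
      rw [en]; exact Real.Gamma_nat_eq_factorial (n-k)
    rw [e1, e2, e3]
    have hfact : (k * n.choose k) * ((k-1).factorial * (n-k).factorial) = n.factorial := by
      have h1 : n.choose k * k.factorial * (n - k).factorial = n.factorial := Nat.choose_mul_factorial_mul_factorial hkn
      have h2 : k * (k-1).factorial = k.factorial := Nat.mul_factorial_pred (by omega)
      calc (k * n.choose k) * ((k-1).factorial * (n-k).factorial) = n.choose k * (k * (k-1).factorial) * (n-k).factorial := by ring
        _ = n.factorial := by rw [h2]; exact h1
    rw [div_eq_iff (by positivity)]
    exact_mod_cast (congrArg (Nat.cast : ℕ → ℝ) hfact).symm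
  set G : ℝ → ℝ := fun x => ((k * n.choose k : ℕ) : ℝ) * x ^ (k - 1) * (1 - x) ^ (n - k) with hG
  have hfG : ∀ x, f x = G x := by intro x; rw [hf x, hC]
  have hcont : Continuous G := by
    apply Continuous.mul
    apply Continuous.mul continuous_const (continuous_pow _)
    exact (continuous_const.sub continuous_id).pow _
  -- set decomposition
  have hset : Set.Ioo (0:ℝ) 1 ∩ {x : ℝ | ε < |x - p|}
      = Set.Ioo 0 (p - ε) ∪ Set.Ioo (p + ε) 1 := by
    ext x
    simp only [Set.mem_inter_iff, Set.mem_Ioo, Set.mem_setOf_eq, Set.mem_union, lt_abs]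
    constructor
    · rintro ⟨⟨h1, h2⟩, h3 | h3⟩
      · right; constructor <;> linarith
      · left; constructor <;> linarith
    · rintro (⟨h1, h2⟩ | ⟨h1, h2⟩)
      · exact ⟨⟨h1, by linarith⟩, Or.inr (by linarith)⟩
      · exact ⟨⟨by linarith, h2⟩, Or.inl (by linarith)⟩
  have hint : ∀ a b : ℝ, IntegrableOn G (Set.Ioo a b) volume :=
    fun a b => (hcont.integrableOn_Icc).mono_set Set.Ioo_subset_Icc_self
  have hdisj : Disjoint (Set.Ioo (0:ℝ) (p - ε)) (Set.Ioo (p + ε) 1) := by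
    rw [Set.disjoint_left]
    intro x hx hx'
    simp only [Set.mem_Ioo] at hx hx'
    linarith [hx.2, hx'.1]
  have hsplit : (∫ x in Set.Ioo (0:ℝ) 1 ∩ {x : ℝ | ε < |x - p|}, f x)
      = (∫ x in Set.Ioo (0:ℝ) (p - ε), G x) + ∫ x in Set.Ioo (p + ε) 1, G x := by
    simp only [hfG, hset]
    exact MeasureTheory.setIntegral_union hdisj measurableSet_Ioo (hint _ _) (hint _ _)
  -- interval integral values
  have hIoo : ∀ a b : ℝ, a ≤ b → (∫ x in Set.Ioo a b, G x) = Fsum n k a - Fsum n k b := by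
    intro a b hab
    rw [← MeasureTheory.integral_Ioc_eq_integral_Ioo, ← intervalIntegral.integral_of_le hab]
    exact Fsum_integral n k a b
  -- Fsum n k 0 = 1
  have hF0 : Fsum n k 0 = 1 := by
    have h1 := Fsum_compl n k (le_trans hkn (Nat.le_succ n)) 0
    have h2 : Fsum n (n + 1 - k) 1 = 0 := Fsum_one n (n + 1 - k) (by omega)
    rw [show (1:ℝ) - 0 = 1 by ring, h2] at h1
    linarith
  -- lower piece
  have hlowval : (∫ x in Set.Ioo (0:ℝ) (p - ε), G x) = Fsum n (n + 1 - k) (1 - (p - ε)) := by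
    rw [hIoo 0 (p - ε) (le_of_lt hpe0), hF0]
    have := Fsum_compl n k (le_trans hkn (Nat.le_succ n)) (p - ε)
    linarith
  have hcast : ((n + 1 - k : ℕ) : ℝ) = (n:ℝ) + 1 - k := by
    rw [Nat.cast_sub (le_trans hkn (Nat.le_succ n))]; push_cast; ring
  have hlowbound : Fsum n (n + 1 - k) (1 - (p - ε))
      ≤ Real.exp (-2 * ((n:ℝ) + 2) * δ ^ 2) := by
    have hb := binom_lower_tail n (n + 1 - k) hn0 (by omega)
      (t := 1 - (p - ε)) (by linarith) (by linarith)
      (by rw [hcast]; nlinarith [hk])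
    have harg : (n:ℝ) * (1 - (p - ε)) - (((n + 1 - k : ℕ) : ℝ) - 1) = (n:ℝ) * ε := by
      rw [hcast]; nlinarith [hk]
    rw [harg] at hb
    have : Fsum n (n + 1 - k) (1 - (p - ε))
        = ∑ j ∈ Finset.range (n + 1 - k), (n.choose j : ℝ) * (1 - (p - ε)) ^ j *
            (1 - (1 - (p - ε))) ^ (n - j) := rfl
    rw [this]
    refine le_trans hb (Real.exp_le_exp.mpr ?_)
    -- -2 (nε)^2 / n ≤ -2 (n+2) δ^2
    have e : ((n:ℝ)+1)*δ = ((n:ℝ)+1)*ε - p := by rw [hδdef]; field_simp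
    have h2 : ((n:ℝ)+1)*δ ≤ (n:ℝ)*ε := by nlinarith [e]
    have h3 : (((n:ℝ)+1)*δ)^2 ≤ ((n:ℝ)*ε)^2 := pow_le_pow_left₀ (mul_nonneg hn1.le hδ0.le) h2 2
    have h4 : (0:ℝ) ≤ ((n:ℝ)+2) * ((n:ℝ)^2*ε^2 - (((n:ℝ)+1)*δ)^2) :=
      mul_nonneg (by linarith) (by nlinarith [h3])
    have h5 : 0 ≤ ((n:ℝ)+1)^2 * ((n:ℝ)*ε^2 - ((n:ℝ)+2)*δ^2) := by
      nlinarith [h4, mul_nonneg hn'.le (sq_nonneg ε)]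
    have key : ((n:ℝ)+2) * δ^2 ≤ (n:ℝ) * ε^2 := by nlinarith [h5, sq_nonneg ((n:ℝ)+1), hn']
    rw [div_le_iff₀ hn']
    nlinarith [key, hn']
  -- upper piece
  by_cases hcase : p + ε < 1
  · have hupval : (∫ x in Set.Ioo (p + ε) 1, G x) = Fsum n k (p + ε) := by
      rw [hIoo (p + ε) 1 (le_of_lt hcase), Fsum_one n k hkn, sub_zero]
    have hupbound : Fsum n k (p + ε) ≤ Real.exp (-2 * ((n:ℝ) + 2) * δ ^ 2) := by
      have hb := binom_lower_tail n k hn0 (le_trans hkn (Nat.le_succ n))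
        (t := p + ε) (by linarith) hcase
        (by nlinarith [hk, mul_pos hn' hε0])
      have harg : (n:ℝ) * (p + ε) - ((k:ℝ) - 1) = (n:ℝ)*ε + 1 := by rw [hk]; ring
      rw [harg] at hb
      refine le_trans hb (Real.exp_le_exp.mpr ?_)
      have e : ((n:ℝ)+1)*δ = ((n:ℝ)+1)*ε - p := by rw [hδdef]; field_simp
      have h2 : ((n:ℝ)+1)*δ ≤ (n:ℝ)*ε + 1 := by nlinarith [e]
      have h3 : (((n:ℝ)+1)*δ)^2 ≤ ((n:ℝ)*ε + 1)^2 := pow_le_pow_left₀ (mul_nonneg hn1.le hδ0.le) h2 2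
      have key : (n:ℝ) * (((n:ℝ)+2) * δ^2) ≤ ((n:ℝ)*ε + 1)^2 := by nlinarith [h3, sq_nonneg δ]
      rw [div_le_iff₀ hn']
      nlinarith [key]
    rw [hsplit, hlowval, hupval]
    linarith [hlowbound, hupbound]
  · have hempty : Set.Ioo (p + ε) 1 = (∅ : Set ℝ) := Set.Ioo_eq_empty (by linarith)
    have hupz : (∫ x in Set.Ioo (p + ε) 1, G x) = 0 := by
      rw [hempty]; simp
    rw [hsplit, hlowval, hupz]
    have := Real.exp_pos (-2 * ((n:ℝ) + 2) * δ ^ 2)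
    linarith [hlowbound]
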